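/- For Q = {1,2,3} (distinct letters): under the stipulation that q_{12}q_{21} ≠ 1, q_{13}q_{31} ≠ 1, q_{23}q_{32} ≠ 1 (no constants in degree 2), the 6-dimensional span of words e_{σ(1)}e_{σ(2)}e_{σ(3)} contains a nonzero constant only if σ_{12} σ_{23} σ_{31} = 1, where σ_{ij} := q_{ij} q_{ji}. -/

import Mathlib

open scoped BigOperators

noncomputable section

/-- The free unital ℂ-algebra on `N` generators, realized as the monoid algebra
of the free monoid on `Fin N`. -/
abbrev FA (N : ℕ) : Type := MonoidAlgebra ℂ (FreeMonoid (Fin N))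

/-- The generator `e i`. -/
def gen {N : ℕ} (i : Fin N) : FA N :=
  MonoidAlgebra.of ℂ (FreeMonoid (Fin N)) (FreeMonoid.of i)

/-- The monomial `e_{i₁} ⋯ e_{iₙ}` attached to a word. -/
def mono {N : ℕ} (w : List (Fin N)) : FA N :=
  MonoidAlgebra.of ℂ (FreeMonoid (Fin N)) (FreeMonoid.ofList w)

/-- The q-differential on monomials: `∂ᵢ(e_j x) = δᵢⱼ x + qᵢⱼ e_j ∂ᵢ x`, `∂ᵢ 1 = 0`. -/
def Dword {N : ℕ} (q : Fin N → Fin N → ℂ) (i : Fin N) : List (Fin N) → FA N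
  | [] => 0
  | j :: w => (if i = j then mono w else 0) + q i j • (gen j * Dword q i w)

/-- The q-differential operator `∂ᵢ`, extended linearly from monomials. -/
def D {N : ℕ} (q : Fin N → Fin N → ℂ) (i : Fin N) (x : FA N) : FA N :=
  Finsupp.sum x.coeff fun w c => c • Dword q i (FreeMonoid.toList w)


-- auxiliary lemmas
lemma gen_mul_mono {N : ℕ} (j : Fin N) (w : List (Fin N)) : gen j * mono w = mono (j :: w) := by
  classical
  simp only [gen, mono, MonoidAlgebra.of_apply, MonoidAlgebra.single_mul_single, one_mul]
  rfl

lemma D_add {N : ℕ} (q : Fin N → Fin N → ℂ) (i : Fin N) (x y : FA N) :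
    D q i (x + y) = D q i x + D q i y := by
  unfold D
  rw [MonoidAlgebra.coeff_add]
  exact Finsupp.sum_add_index' (by simp) (by intro w c1 c2; rw [add_smul])

lemma D_smul_mono {N : ℕ} (q : Fin N → Fin N → ℂ) (i : Fin N) (c : ℂ) (w : List (Fin N)) :
    D q i (c • mono w) = c • Dword q i w := by
  unfold D mono
  rw [MonoidAlgebra.of_apply, MonoidAlgebra.smul_single, smul_eq_mul, mul_one]
  rw [MonoidAlgebra.coeff_single, Finsupp.sum_single_index (by simp), FreeMonoid.toList_ofList]

lemma smul_mono {N : ℕ} (c : ℂ) (w : List (Fin N)) :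
    c • (mono w : FA N) = MonoidAlgebra.single (FreeMonoid.ofList w) c := by
  rw [mono, MonoidAlgebra.of_apply, MonoidAlgebra.smul_single', mul_one]

lemma coeff_eq {N : ℕ} (x y : FA N) (h : x = y) (v : FreeMonoid (Fin N)) : x.coeff v = y.coeff v := by
  rw [h]

lemma single_coeff {N : ℕ} (w v : List (Fin N)) (c : ℂ) :
    (MonoidAlgebra.single (FreeMonoid.ofList w) c : FA N).coeff (FreeMonoid.ofList v)
      = if w = v then c else 0 := by
  classical
  rw [MonoidAlgebra.coeff_single_apply]
  congr 1

lemma add_coeff {N : ℕ} (x y : FA N) (v : FreeMonoid (Fin N)) : (x + y).coeff v = x.coeff v + y.coeff v :=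
  Finsupp.add_apply x.coeff y.coeff v

lemma zero_coeff {N : ℕ} (v : FreeMonoid (Fin N)) : (0 : FA N).coeff v = 0 := rfl

open Equiv in
lemma sum_perm (F : Equiv.Perm (Fin 3) → FA 3) :
    ∑ σ : Equiv.Perm (Fin 3), F σ =
      F 1 + F (swap 0 1) + F (swap 0 2) + F (swap 1 2) + F (swap 0 1 * swap 0 2)
        + F (swap 0 2 * swap 0 1) := by
  rw [show (Finset.univ : Finset (Equiv.Perm (Fin 3))) =
    {1, swap 0 1, swap 0 2, swap 1 2, swap 0 1 * swap 0 2, swap 0 2 * swap 0 1} from by decide]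
  rw [Finset.sum_insert (by decide), Finset.sum_insert (by decide), Finset.sum_insert (by decide),
    Finset.sum_insert (by decide), Finset.sum_insert (by decide), Finset.sum_singleton]
  abel

open Equiv in
lemma sum_expand (f : Equiv.Perm (Fin 3) → ℂ) :
    ∑ σ : Equiv.Perm (Fin 3), f σ • mono [σ 0, σ 1, σ 2] =
      f 1 • mono [0,1,2] + f (swap 0 1) • mono [1,0,2] + f (swap 0 2) • mono [2,1,0]
      + f (swap 1 2) • mono [0,2,1] + f (swap 0 1 * swap 0 2) • mono [2,0,1]
      + f (swap 0 2 * swap 0 1) • mono [1,2,0] := by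
  rw [sum_perm (fun σ => f σ • mono [σ 0, σ 1, σ 2])]
  norm_num [Equiv.swap_apply_def, Equiv.Perm.mul_apply, Fin.ext_iff]

open Equiv in
/-- for `Q = {1,2,3}` with `σ_{ij} := q_{ij}q_{ji}`, under the stipulation
`σ₁₂ ≠ 1`, `σ₁₃ ≠ 1`, `σ₂₃ ≠ 1` (no constants in degree two), the span of the six
multilinear words contains a nonzero constant only if `σ₁₂ σ₂₃ σ₃₁ = 1`. -/
theorem constant_123_necessary {q : Fin 3 → Fin 3 → ℂ} (hq : ∀ i j, q i j ≠ 0)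
    (h12 : q 0 1 * q 1 0 ≠ 1) (h13 : q 0 2 * q 2 0 ≠ 1) (h23 : q 1 2 * q 2 1 ≠ 1)
    (hC : ∃ f : Equiv.Perm (Fin 3) → ℂ,
      (∑ σ : Equiv.Perm (Fin 3), f σ • mono [σ 0, σ 1, σ 2]) ≠ 0 ∧
      D q 0 (∑ σ : Equiv.Perm (Fin 3), f σ • mono [σ 0, σ 1, σ 2]) = 0 ∧
      D q 1 (∑ σ : Equiv.Perm (Fin 3), f σ • mono [σ 0, σ 1, σ 2]) = 0 ∧
      D q 2 (∑ σ : Equiv.Perm (Fin 3), f σ • mono [σ 0, σ 1, σ 2]) = 0) :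
    (q 0 1 * q 1 0) * (q 1 2 * q 2 1) * (q 2 0 * q 0 2) = 1 := by
  obtain ⟨f, hne, hD0, hD1, hD2⟩ := hC
  rw [sum_expand] at hne hD0 hD1 hD2
  set a := f 1 with ha_def
  set c := f (swap 0 1) with hc_def
  set g := f (swap 0 2) with hg_def
  set b := f (swap 1 2) with hb_def
  set e := f (swap 0 1 * swap 0 2) with he_def
  set d := f (swap 0 2 * swap 0 1) with hd_def
  simp only [D_add, D_smul_mono] at hD0 hD1 hD2
  simp only [Dword, gen_mul_mono, smul_smul, smul_zero, mul_zero, add_zero, zero_add,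
    smul_add, mul_one] at hD0 hD1 hD2
  norm_num [Fin.ext_iff] at hD0 hD1 hD2
  simp only [gen_mul_mono, smul_smul] at hD0 hD1 hD2
  have E1 := coeff_eq _ _ hD0 (FreeMonoid.ofList [1,2])
  have E2 := coeff_eq _ _ hD0 (FreeMonoid.ofList [2,1])
  have E3 := coeff_eq _ _ hD1 (FreeMonoid.ofList [0,2])
  have E4 := coeff_eq _ _ hD1 (FreeMonoid.ofList [2,0])
  have E5 := coeff_eq _ _ hD2 (FreeMonoid.ofList [0,1])
  have E6 := coeff_eq _ _ hD2 (FreeMonoid.ofList [1,0])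
  clear hD0 hD1 hD2
  simp only [smul_mono, add_coeff, zero_coeff, single_coeff] at E1 E2 E3 E4 E5 E6
  norm_num [Fin.ext_iff] at E1 E2 E3 E4 E5 E6
  have n01 : (1:ℂ) - q 0 1 * q 1 0 ≠ 0 := sub_ne_zero.mpr (Ne.symm h12)
  have n02 : (1:ℂ) - q 0 2 * q 2 0 ≠ 0 := sub_ne_zero.mpr (Ne.symm h13)
  have n12 : (1:ℂ) - q 1 2 * q 2 1 ≠ 0 := sub_ne_zero.mpr (Ne.symm h23)
  have hd2 : d = q 1 2 * q 1 0 * q 2 0 * b := by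
    have h0 : ((1:ℂ) - q 1 2 * q 2 1) * (d - q 1 2 * q 1 0 * q 2 0 * b) = 0 := by
      linear_combination E4 - q 1 2 * E6 + q 1 2 * q 2 1 * q 2 0 * E3 - q 1 2 * q 1 0 * E5
    exact sub_eq_zero.mp ((mul_eq_zero.mp h0).resolve_left n12)
  have hg2 : g = q 1 0 * q 2 0 * q 2 1 * a := by
    linear_combination E6 - q 2 1 * hd2 - q 2 1 * q 2 0 * E3
  have hA : ((1:ℂ) - q 0 1 * q 1 0) * a = q 0 1 * q 1 0 * q 1 2 * ((1:ℂ) - q 0 2 * q 2 0) * b := by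
    linear_combination E1 - q 0 1 * E3 - q 0 1 * q 0 2 * hd2
  have hB : ((1:ℂ) - q 0 2 * q 2 0) * b = q 0 2 * q 2 0 * q 2 1 * ((1:ℂ) - q 0 1 * q 1 0) * a := by
    linear_combination E2 - q 0 2 * E5 - q 0 2 * q 0 1 * hg2
  by_cases hb0 : b = 0
  · have ha0 : a = 0 := by
      have h := hB
      rw [hb0, mul_zero] at h
      simpa [mul_eq_zero, hq 0 2, hq 2 0, hq 2 1, n01, sub_eq_zero] using h.symm
    have hc0 : c = 0 := by linear_combination E3 - q 1 0 * ha0 - q 1 0 * q 1 2 * hb0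
    have he0 : e = 0 := by linear_combination E5 - q 2 0 * hb0 - q 2 0 * q 2 1 * ha0
    have hd0 : d = 0 := by linear_combination hd2 + q 1 2 * q 1 0 * q 2 0 * hb0
    have hg0 : g = 0 := by linear_combination hg2 + q 1 0 * q 2 0 * q 2 1 * ha0
    exact absurd (by rw [ha0, hb0, hc0, hd0, he0, hg0]; simp) hne
  · have ha0 : a ≠ 0 := by
      intro h
      apply hb0
      have hA' := hA
      rw [h, mul_zero] at hA'
      simpa [mul_eq_zero, hq 0 1, hq 1 0, hq 1 2, n02, sub_eq_zero] using hA'.symm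
    have hM : (((1:ℂ) - q 0 1 * q 1 0) * a) * (((1:ℂ) - q 0 2 * q 2 0) * b)
        = (q 0 1 * q 1 0 * q 1 2 * ((1:ℂ) - q 0 2 * q 2 0) * b)
          * (q 0 2 * q 2 0 * q 2 1 * ((1:ℂ) - q 0 1 * q 1 0) * a) := by
      rw [hA, hB]
    have key : (q 0 1 * q 1 0 * (q 1 2 * q 2 1) * (q 2 0 * q 0 2) - 1)
        * (((1:ℂ) - q 0 1 * q 1 0) * ((1:ℂ) - q 0 2 * q 2 0) * a * b) = 0 := by
      linear_combination -hM
    have hfac : ((1:ℂ) - q 0 1 * q 1 0) * ((1:ℂ) - q 0 2 * q 2 0) * a * b ≠ 0 :=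
      mul_ne_zero (mul_ne_zero (mul_ne_zero n01 n02) ha0) hb0
    have := (mul_eq_zero.mp key).resolve_right hfac
    linear_combination this
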